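/- Let A be a distributive bilattice and x : A → {0,1} a bounded lattice homomorphism from the t-lattice reduct of A to 2 with x(0_k) = 0. Then the map h : A → 4 defined by h(c) = (x(c), 1 − x(¬c)) (viewing elements of 4 as pairs in {0,1}²) is a bilattice homomorphism from A to the four-element distributive bilattice 4. -/
import Mathlib


/-- An unbounded distributive pre-bilattice: two lattice structures
`(∨_t, ∧_t)` and `(∨_k, ∧_k)` on the same carrier, with each of the four
operations distributing over each of the other three. -/
structure DPBU (A : Type*) where
  tsup : A → A → A
  tinf : A → A → A
  ksup : A → A → A
  kinf : A → A → A
  tsup_comm : ∀ a b, tsup a b = tsup b a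
  tinf_comm : ∀ a b, tinf a b = tinf b a
  tsup_assoc : ∀ a b c, tsup (tsup a b) c = tsup a (tsup b c)
  tinf_assoc : ∀ a b c, tinf (tinf a b) c = tinf a (tinf b c)
  tsup_absorb : ∀ a b, tsup a (tinf a b) = a
  tinf_absorb : ∀ a b, tinf a (tsup a b) = a
  ksup_comm : ∀ a b, ksup a b = ksup b a
  kinf_comm : ∀ a b, kinf a b = kinf b a
  ksup_assoc : ∀ a b c, ksup (ksup a b) c = ksup a (ksup b c)
  kinf_assoc : ∀ a b c, kinf (kinf a b) c = kinf a (kinf b c)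
  ksup_absorb : ∀ a b, ksup a (kinf a b) = a
  kinf_absorb : ∀ a b, kinf a (ksup a b) = a
  tsup_tinf : ∀ a b c, tsup a (tinf b c) = tinf (tsup a b) (tsup a c)
  tsup_ksup : ∀ a b c, tsup a (ksup b c) = ksup (tsup a b) (tsup a c)
  tsup_kinf : ∀ a b c, tsup a (kinf b c) = kinf (tsup a b) (tsup a c)
  tinf_tsup : ∀ a b c, tinf a (tsup b c) = tsup (tinf a b) (tinf a c)
  tinf_ksup : ∀ a b c, tinf a (ksup b c) = ksup (tinf a b) (tinf a c)
  tinf_kinf : ∀ a b c, tinf a (kinf b c) = kinf (tinf a b) (tinf a c)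
  ksup_tsup : ∀ a b c, ksup a (tsup b c) = tsup (ksup a b) (ksup a c)
  ksup_tinf : ∀ a b c, ksup a (tinf b c) = tinf (ksup a b) (ksup a c)
  ksup_kinf : ∀ a b c, ksup a (kinf b c) = kinf (ksup a b) (ksup a c)
  kinf_tsup : ∀ a b c, kinf a (tsup b c) = tsup (kinf a b) (kinf a c)
  kinf_tinf : ∀ a b c, kinf a (tinf b c) = tinf (kinf a b) (kinf a c)
  kinf_ksup : ∀ a b c, kinf a (ksup b c) = ksup (kinf a b) (kinf a c)

/-- The truth order `≤_t`. -/
def DPBU.tle {A : Type*} (B : DPBU A) (a b : A) : Prop := B.tsup a b = b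

/-- The knowledge order `≤_k`. -/
def DPBU.kle {A : Type*} (B : DPBU A) (a b : A) : Prop := B.ksup a b = b

/-- A (bounded) distributive bilattice: bounded distributive t-lattice,
k-bounds `0_k`, `1_k`, k-operations given by the 90° Lemma formulas, and an
involutory negation which is a dual endomorphism of the bounded t-lattice
and an endomorphism of the bounded k-lattice. -/
structure DB (A : Type*) extends DPBU A where
  neg : A → A
  tbot : A
  ttop : A
  kbot : A
  ktop : A
  tbot_le : ∀ a, tsup tbot a = a
  le_ttop : ∀ a, tsup a ttop = ttop
  kbot_le : ∀ a, ksup kbot a = a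
  le_ktop : ∀ a, ksup a ktop = ktop
  ksup_def : ∀ a b, ksup a b = tsup (tinf (tinf a b) kbot) (tinf (tsup a b) ktop)
  kinf_def : ∀ a b, kinf a b = tsup (tinf (tinf a b) ktop) (tinf (tsup a b) kbot)
  neg_neg : ∀ a, neg (neg a) = a
  neg_tsup : ∀ a b, neg (tsup a b) = tinf (neg a) (neg b)
  neg_tinf : ∀ a b, neg (tinf a b) = tsup (neg a) (neg b)
  neg_ksup : ∀ a b, neg (ksup a b) = ksup (neg a) (neg b)
  neg_kinf : ∀ a b, neg (kinf a b) = kinf (neg a) (neg b)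
  neg_tbot : neg tbot = ttop
  neg_ttop : neg ttop = tbot
  neg_kbot : neg kbot = kbot
  neg_ktop : neg ktop = ktop

/-- The four-element distributive bilattice `4` (= FOUR with bounds), on binary
strings `{00,01,10,11}` represented as `Bool × Bool` (so `00 = (false,false)`
etc.).  The t-order has bottom `00` and top `11`; the k-order has bottom `01`
and top `10`; negation swaps `00 ↔ 11` and fixes `01`, `10`. -/
def fourDB : DB (Bool × Bool) where
  tsup p q := (p.1 || q.1, p.2 || q.2)
  tinf p q := (p.1 && q.1, p.2 && q.2)
  ksup p q := (p.1 || q.1, p.2 && q.2)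
  kinf p q := (p.1 && q.1, p.2 || q.2)
  neg p := (!p.2, !p.1)
  tbot := (false, false)
  ttop := (true, true)
  kbot := (false, true)
  ktop := (true, false)
  tsup_comm := by decide
  tinf_comm := by decide
  tsup_assoc := by decide
  tinf_assoc := by decide
  tsup_absorb := by decide
  tinf_absorb := by decide
  ksup_comm := by decide
  kinf_comm := by decide
  ksup_assoc := by decide
  kinf_assoc := by decide
  ksup_absorb := by decide
  kinf_absorb := by decide
  tsup_tinf := by decide
  tsup_ksup := by decide
  tsup_kinf := by decide
  tinf_tsup := by decide
  tinf_ksup := by decide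
  tinf_kinf := by decide
  ksup_tsup := by decide
  ksup_tinf := by decide
  ksup_kinf := by decide
  kinf_tsup := by decide
  kinf_tinf := by decide
  kinf_ksup := by decide
  tbot_le := by decide
  le_ttop := by decide
  kbot_le := by decide
  le_ktop := by decide
  ksup_def := by decide
  kinf_def := by decide
  neg_neg := by decide
  neg_tsup := by decide
  neg_tinf := by decide
  neg_ksup := by decide
  neg_kinf := by decide
  neg_tbot := by decide
  neg_ttop := by decide
  neg_kbot := by decide
  neg_ktop := by decide

/-- If `x : A → 2` is a bounded lattice homomorphism from the t-lattice reduct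
with `x(0_k) = 0`, then `h(c) = (x(c), 1 - x(¬c))` is a bilattice homomorphism
from `A` to `4`. -/
theorem stmt_13 {A : Type*} (B : DB A) (x : A → Bool)
    (hsup : ∀ a b, x (B.tsup a b) = (x a || x b))
    (hinf : ∀ a b, x (B.tinf a b) = (x a && x b))
    (hbot : x B.tbot = false) (htop : x B.ttop = true)
    (hkbot : x B.kbot = false) :
    ∀ h : A → Bool × Bool, (∀ c, h c = (x c, !(x (B.neg c)))) →
      (∀ a b, h (B.tsup a b) = fourDB.tsup (h a) (h b)) ∧
      (∀ a b, h (B.tinf a b) = fourDB.tinf (h a) (h b)) ∧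
      (∀ a, h (B.neg a) = fourDB.neg (h a)) ∧
      h B.tbot = fourDB.tbot ∧ h B.ttop = fourDB.ttop ∧
      h B.kbot = fourDB.kbot ∧ h B.ktop = fourDB.ktop := by
  intro h hh
  -- basic lattice facts in A
  have tinf_top : ∀ a, B.tinf a B.ttop = a := fun a => by
    have := B.tinf_absorb a B.ttop
    rwa [B.le_ttop a] at this
  have tinf_idem : ∀ a, B.tinf a a = a := fun a => by
    have := B.tinf_absorb a (B.tinf a a)
    rwa [B.tsup_absorb a a] at this
  -- tsup kbot ktop = ttop
  have key : B.tsup B.kbot B.ktop = B.ttop := by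
    have h1 := B.kbot_le B.ttop
    rw [B.ksup_def, tinf_top, tinf_idem, B.le_ttop,
      B.tinf_comm B.ttop B.ktop, tinf_top] at h1
    exact h1
  have hktop : x B.ktop = true := by
    have := congrArg x key
    rw [hsup, hkbot, htop] at this
    simpa using this
  have hnegt : x (B.neg B.tbot) = true := by rw [B.neg_tbot, htop]
  have hnegT : x (B.neg B.ttop) = false := by rw [B.neg_ttop, hbot]
  refine ⟨?_, ?_, ?_, ?_, ?_, ?_, ?_⟩
  · intro a b
    simp only [hh, fourDB, B.neg_tsup, hsup, hinf]
    cases x a <;> cases x b <;> cases x (B.neg a) <;> cases x (B.neg b) <;> rfl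
  · intro a b
    simp only [hh, fourDB, B.neg_tinf, hsup, hinf]
    cases x a <;> cases x b <;> cases x (B.neg a) <;> cases x (B.neg b) <;> rfl
  · intro a
    simp only [hh, fourDB, B.neg_neg]
    cases x a <;> cases x (B.neg a) <;> rfl
  · simp [hh, fourDB, hbot, hnegt]
  · simp [hh, fourDB, htop, hnegT]
  · simp [hh, fourDB, hkbot, B.neg_kbot]
  · simp [hh, fourDB, hktop, B.neg_ktop]
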